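/- For all n ≥ 1, the positive Eulerian polynomial A_n^+(t) = ∑_{w ∈ S_n, sgn(w)=1} t^{des(w)+1} satisfies A_n^+(t)/(1-t)^{n+1} = ∑_{k ≥ 0} ((k^n + k^{⌈n/2⌉})/2) t^k as formal power series. -/

import Mathlib

open scoped Classical

/-- Number of descents of a permutation of `{0,…,n-1}`. -/
noncomputable def desA {n : ℕ} (w : Equiv.Perm (Fin n)) : ℕ :=
  ((Finset.range (n - 1)).filter (fun i =>
    ∃ h : i + 1 < n, w ⟨i + 1, h⟩ < w ⟨i, Nat.lt_of_succ_lt h⟩)).card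

/-- Number of inversions of a permutation. -/
noncomputable def invA {n : ℕ} (w : Equiv.Perm (Fin n)) : ℕ :=
  (Finset.univ.filter (fun p : Fin n × Fin n => p.1 < p.2 ∧ w p.2 < w p.1)).card

open Finset Equiv Equiv.Perm

noncomputable def wordInv {n k : ℕ} (f : Fin n → Fin k) : ℕ :=
  (Finset.univ.filter (fun p : Fin n × Fin n => p.1 < p.2 ∧ f p.2 < f p.1)).card

noncomputable def cnt {n k : ℕ} (g : Fin n → Fin k) (x : Fin k) : ℕ :=
  (Finset.univ.filter (fun q => g q < x)).card

theorem wordInv_cons {n k : ℕ} (x : Fin k) (g : Fin n → Fin k) :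
    wordInv (Fin.cons x g) = cnt g x + wordInv g := by
  classical
  unfold wordInv cnt
  rw [Finset.card_filter, Finset.card_filter, Finset.card_filter]
  rw [← Finset.univ_product_univ, Finset.sum_product, Fin.sum_univ_succ]
  rw [← Finset.univ_product_univ, Finset.sum_product]
  congr 1
  · rw [Fin.sum_univ_succ]
    simp [Fin.succ_pos]
  · apply Finset.sum_congr rfl
    intro q1 _
    rw [Fin.sum_univ_succ]
    simp [Fin.succ_lt_succ_iff]

theorem count_cons {n k : ℕ} (y x : Fin k) (g : Fin n → Fin k) :
    cnt (Fin.cons y g) x = (if y < x then 1 else 0) + cnt g x := by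
  classical
  unfold cnt
  rw [Finset.card_filter, Finset.card_filter, Fin.sum_univ_succ]
  simp

theorem pair_sum (k : ℕ) (c : Fin k → ℕ) :
    ∑ x : Fin k, ∑ y : Fin k,
      (-1 : ℤ) ^ ((if y < x then 1 else 0) + c x + c y) = k := by
  classical
  rw [← Finset.sum_product']
  rw [← Finset.sum_filter_add_sum_filter_not (Finset.univ ×ˢ Finset.univ)
    (fun p : Fin k × Fin k => p.1 = p.2)]
  have h1 : ∑ p ∈ (Finset.univ ×ˢ Finset.univ).filter
      (fun p : Fin k × Fin k => p.1 = p.2),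
      (-1 : ℤ) ^ ((if p.2 < p.1 then 1 else 0) + c p.1 + c p.2) = k := by
    have hcard : ((Finset.univ ×ˢ Finset.univ).filter
        (fun p : Fin k × Fin k => p.1 = p.2)).card = (Finset.univ : Finset (Fin k)).card := by
      apply Finset.card_nbij (fun p => p.1)
      · rintro ⟨a, b⟩ h; simp
      · rintro ⟨a, b⟩ ha ⟨a', b'⟩ hb h
        simp only [Finset.coe_filter, Set.mem_setOf_eq] at ha hb
        simp only at h
        simp [Prod.ext_iff, h, ← ha.2, ← hb.2]
      · intro a _
        exact ⟨(a, a), by simp, rfl⟩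
    rw [Finset.sum_congr rfl (g := fun _ => (1 : ℤ)) ?_]
    · rw [Finset.sum_const, hcard, Finset.card_univ, Fintype.card_fin, nsmul_eq_mul, mul_one]
    · rintro ⟨a, b⟩ h
      simp only [Finset.mem_filter] at h
      rcases h with ⟨-, rfl⟩
      rw [if_neg (lt_irrefl _)]
      rw [zero_add, ← two_mul, pow_mul]
      norm_num
  have h2 : ∑ p ∈ (Finset.univ ×ˢ Finset.univ).filter
      (fun p : Fin k × Fin k => ¬ p.1 = p.2),
      (-1 : ℤ) ^ ((if p.2 < p.1 then 1 else 0) + c p.1 + c p.2) = 0 := by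
    apply Finset.sum_involution (fun p _ => (p.2, p.1))
    · rintro ⟨a, b⟩ h
      simp only [Finset.mem_filter] at h
      rcases lt_or_gt_of_ne h.2 with hl | hl
      · rw [if_neg (not_lt.2 hl.le), if_pos hl]
        ring
      · rw [if_pos hl, if_neg (not_lt.2 hl.le)]
        ring
    · rintro ⟨a, b⟩ h _
      simp only [Finset.mem_filter] at h
      intro h'
      exact h.2 ((congrArg Prod.fst h').symm)
    · rintro ⟨a, b⟩ h
      simp only [Finset.mem_filter, Finset.mem_univ, Finset.mem_product, true_and] at h ⊢
      exact fun h' => h h'.symm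
    · rintro ⟨a, b⟩ h; rfl
  rw [h1, h2, add_zero]

theorem signed_word_sum (k : ℕ) : ∀ n : ℕ,
    ∑ f : Fin n → Fin k, (-1 : ℤ) ^ (wordInv f) = (k : ℤ) ^ ((n + 1) / 2) := by
  intro n
  induction n using Nat.twoStepInduction with
  | zero =>
    have h0 : ∀ f : Fin 0 → Fin k, (-1 : ℤ) ^ (wordInv f) = 1 := by
      intro f
      have : wordInv f = 0 := by
        unfold wordInv
        rw [Finset.card_eq_zero, Finset.filter_eq_empty_iff]
        rintro ⟨a, b⟩ _
        exact a.elim0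
      rw [this, pow_zero]
    rw [Finset.sum_congr rfl (fun f _ => h0 f), Finset.sum_const]
    simp
  | one =>
    have h0 : ∀ f : Fin 1 → Fin k, wordInv f = 0 := by
      intro f
      unfold wordInv
      rw [Finset.card_eq_zero, Finset.filter_eq_empty_iff]
      rintro ⟨a, b⟩ _
      simp only [not_and]
      intro h
      exact absurd (Subsingleton.elim a b) h.ne
    calc ∑ f : Fin 1 → Fin k, (-1 : ℤ) ^ (wordInv f)
        = ∑ f : Fin 1 → Fin k, 1 := by
          apply Finset.sum_congr rfl; intro f _; rw [h0 f, pow_zero]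
      _ = (k : ℤ) ^ 1 := by simp
  | more n ih _ =>
    have e2 : ((n + 1 + 1) + 1) / 2 = (n + 1) / 2 + 1 := by omega
    have expand : ∀ (x y : Fin k) (g : Fin n → Fin k),
        wordInv (Fin.cons x (Fin.cons y g))
          = ((if y < x then 1 else 0) + cnt g x + cnt g y) + wordInv g := by
      intro x y g
      rw [wordInv_cons, count_cons, wordInv_cons]
      omega
    calc ∑ f : Fin (n + 2) → Fin k, (-1 : ℤ) ^ (wordInv f)
        = ∑ p : Fin k × (Fin (n + 1) → Fin k), (-1 : ℤ) ^ (wordInv (Fin.cons p.1 p.2)) :=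
          (Fintype.sum_equiv (Fin.consEquiv (fun _ => Fin k)) _ _ (fun p => rfl)).symm
      _ = ∑ x : Fin k, ∑ h : Fin (n + 1) → Fin k, (-1 : ℤ) ^ (wordInv (Fin.cons x h)) :=
          Fintype.sum_prod_type _
      _ = ∑ x : Fin k, ∑ q : Fin k × (Fin n → Fin k),
            (-1 : ℤ) ^ (wordInv (Fin.cons x (Fin.cons q.1 q.2))) := by
          refine Finset.sum_congr rfl fun x _ => ?_
          exact (Fintype.sum_equiv (Fin.consEquiv (fun _ => Fin k)) _ _ (fun p => rfl)).symm
      _ = ∑ x : Fin k, ∑ y : Fin k, ∑ g : Fin n → Fin k,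
            (-1 : ℤ) ^ (wordInv (Fin.cons x (Fin.cons y g))) := by
          refine Finset.sum_congr rfl fun x _ => ?_
          exact Fintype.sum_prod_type _
      _ = ∑ g : Fin n → Fin k, ∑ x : Fin k, ∑ y : Fin k,
            (-1 : ℤ) ^ (wordInv (Fin.cons x (Fin.cons y g))) := by
          calc ∑ x : Fin k, ∑ y : Fin k, ∑ g : Fin n → Fin k,
                (-1 : ℤ) ^ (wordInv (Fin.cons x (Fin.cons y g)))
              = ∑ x : Fin k, ∑ g : Fin n → Fin k, ∑ y : Fin k,
                (-1 : ℤ) ^ (wordInv (Fin.cons x (Fin.cons y g))) :=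
                Finset.sum_congr rfl fun x _ => Finset.sum_comm
            _ = ∑ g : Fin n → Fin k, ∑ x : Fin k, ∑ y : Fin k,
                (-1 : ℤ) ^ (wordInv (Fin.cons x (Fin.cons y g))) := Finset.sum_comm
      _ = ∑ g : Fin n → Fin k, (-1 : ℤ) ^ (wordInv g) * (k : ℤ) := by
          refine Finset.sum_congr rfl fun g _ => ?_
          rw [← pair_sum k (cnt g), Finset.mul_sum]
          refine Finset.sum_congr rfl fun x _ => ?_
          rw [Finset.mul_sum]
          refine Finset.sum_congr rfl fun y _ => ?_
          rw [expand, pow_add]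
          ring
      _ = (k : ℤ) ^ ((n + 2 + 1) / 2) := by
          rw [← Finset.sum_mul, ih, show (n + 2 + 1) / 2 = (n+1)/2 + 1 by omega, pow_succ]

theorem sign_eq_signAux {n : ℕ} (w : Perm (Fin n)) : sign w = signAux w := by
  refine Equiv.Perm.swap_induction_on w ?_ ?_
  · simp [signAux_one]
  · intro f x y hxy ih
    rw [map_mul, signAux_mul, ih, sign_swap hxy, signAux_swap hxy]

theorem sign_eq_wordInv {n : ℕ} (w : Perm (Fin n)) :
    (sign w : ℤ) = (-1) ^ wordInv (⇑w) := by
  rw [sign_eq_signAux]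
  unfold Equiv.Perm.signAux
  rw [Finset.prod_ite, Finset.prod_const, Finset.prod_const, one_pow, mul_one]
  push_cast
  congr 1
  rw [wordInv]
  apply Finset.card_nbij (fun a => (a.2, a.1))
  · rintro ⟨a, b⟩ ha
    simp only [Finset.mem_filter, Finset.mem_univ, true_and, mem_finPairsLT] at *
    obtain ⟨h1, h2⟩ := Finset.mem_filter.1 ha
    rw [mem_finPairsLT] at h1
    exact Finset.mem_filter.2 ⟨Finset.mem_univ _, h1, lt_of_le_of_ne h2 (fun he => (h1.ne (w.injective he.symm)).elim)⟩
  · rintro ⟨a, b⟩ ha ⟨c, d⟩ hc h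
    simp only [Prod.mk.injEq] at h
    cases h.1; cases h.2; rfl
  · rintro ⟨a, b⟩ ha
    refine ⟨⟨b, a⟩, ?_, rfl⟩
    simp only [Finset.coe_filter, Finset.mem_univ, true_and, Set.mem_setOf_eq] at ha
    simp only [Finset.mem_coe, Finset.mem_filter, mem_finPairsLT]
    exact ⟨ha.1, ha.2.le⟩

section helpers

variable {n k M : ℕ}

/-- adjacency criterion for strict monotonicity on `Fin n` -/
theorem strictMono_adj {α : Type*} [Preorder α] {m : ℕ} {u : Fin m → α}
    (h : ∀ i : ℕ, ∀ hi : i + 1 < m, u ⟨i, Nat.lt_of_succ_lt hi⟩ < u ⟨i + 1, hi⟩) :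
    StrictMono u := by
  cases m with
  | zero => intro a; exact a.elim0
  | succ m =>
    rw [Fin.strictMono_iff_lt_succ]
    intro i
    exact h i.val (Nat.succ_lt_succ i.isLt)

theorem strictMono_gap {u : Fin M → Fin k} (hu : StrictMono u) :
    ∀ d : ℕ, ∀ i j : Fin M, j.val = i.val + d → (u i).val + j.val ≤ (u j).val + i.val := by
  intro d
  induction d with
  | zero => intro i j hj; have : i = j := Fin.ext hj.symm; subst this; omega
  | succ d ih =>
    intro i j hj
    have hjM : i.val + d < M := by omega
    have h1 := ih i ⟨i.val + d, hjM⟩ rfl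
    have h2 : u ⟨i.val + d, hjM⟩ < u j := hu (by simp [Fin.lt_def]; omega)
    have h2' := (Fin.lt_def).1 h2
    simp only at h1 h2' ⊢
    omega

theorem strictMono_le_apply {u : Fin M → Fin k} (hu : StrictMono u) (i : Fin M) :
    i.val ≤ (u i).val := by
  have h0 : (0 : ℕ) < M := i.pos
  have h := strictMono_gap hu i.val ⟨0, h0⟩ i (by simp)
  have h2 : (⟨0, h0⟩ : Fin M).val = 0 := rfl
  omega

theorem card_strictMono (m M : ℕ) :
    (Finset.univ.filter (fun b : Fin m → Fin M => StrictMono b)).card = M.choose m := by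
  classical
  rw [show M.choose m = ((Finset.univ : Finset (Fin M)).powersetCard m).card by
    rw [Finset.card_powersetCard, Finset.card_univ, Fintype.card_fin]]
  refine Finset.card_bij' (fun b _ => Finset.univ.image b)
    (fun s hs => s.orderEmbOfFin (by
      rw [Finset.mem_powersetCard] at hs; exact hs.2)) ?_ ?_ ?_ ?_
  · intro b hb
    simp only [Finset.mem_filter, Finset.mem_univ, true_and] at hb
    rw [Finset.mem_powersetCard]
    refine ⟨Finset.subset_univ _, ?_⟩
    rw [Finset.card_image_of_injective _ hb.injective, Finset.card_univ, Fintype.card_fin]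
  · intro s hs
    simp only [Finset.mem_filter, Finset.mem_univ, true_and]
    exact (s.orderEmbOfFin _).strictMono
  · intro b hb
    simp only [Finset.mem_filter, Finset.mem_univ, true_and] at hb
    exact (Finset.orderEmbOfFin_unique _
      (fun x => Finset.mem_image_of_mem b (Finset.mem_univ x)) hb).symm
  · intro s hs
    simp only [Finset.mem_powersetCard] at hs
    apply Finset.coe_injective
    rw [Finset.coe_image, Finset.coe_univ, Set.image_univ, Finset.range_orderEmbOfFin]
end helpers

section sorting
variable {n k : ℕ}

noncomputable def desSet {n : ℕ} (w : Equiv.Perm (Fin n)) : Finset ℕ :=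
  (Finset.range (n - 1)).filter (fun i =>
    ∃ h : i + 1 < n, w ⟨i + 1, h⟩ < w ⟨i, Nat.lt_of_succ_lt h⟩)

theorem desA_eq {w : Equiv.Perm (Fin n)} : desA w = (desSet w).card := rfl

theorem mem_desSet {w : Equiv.Perm (Fin n)} {i : ℕ} (hi : i + 1 < n) :
    i ∈ desSet w ↔ w ⟨i + 1, hi⟩ < w ⟨i, Nat.lt_of_succ_lt hi⟩ := by
  unfold desSet
  rw [Finset.mem_filter, Finset.mem_range]
  constructor
  · rintro ⟨-, h, hlt⟩; exact hlt
  · intro h; exact ⟨by omega, hi, h⟩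

theorem desA_le {w : Equiv.Perm (Fin n)} : desA w ≤ n - 1 := by
  rw [desA_eq]
  calc (desSet w).card ≤ (Finset.range (n-1)).card := Finset.card_filter_le _ _
    _ = n - 1 := Finset.card_range _

noncomputable def clt {n : ℕ} (w : Equiv.Perm (Fin n)) (i : ℕ) : ℕ :=
  ((desSet w).filter (· < i)).card

theorem clt_zero {w : Equiv.Perm (Fin n)} : clt w 0 = 0 := by
  unfold clt
  rw [Finset.card_eq_zero, Finset.filter_eq_empty_iff]
  intro x _
  omega

theorem clt_succ {w : Equiv.Perm (Fin n)} (i : ℕ) :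
    clt w (i + 1) = clt w i + (if i ∈ desSet w then 1 else 0) := by
  unfold clt
  have : ((desSet w).filter (· < i + 1)) =
      ((desSet w).filter (· < i)) ∪ ((desSet w).filter (· = i)) := by
    rw [← Finset.filter_or]
    apply Finset.filter_congr
    intro x _
    constructor
    · intro h; omega
    · intro h; omega
  rw [this, Finset.card_union_of_disjoint, Finset.filter_eq']
  · congr 1
    split_ifs <;> simp
  · rw [Finset.disjoint_filter]
    intro x _ h1 h2
    omega

theorem clt_le_self {w : Equiv.Perm (Fin n)} (i : ℕ) : clt w i ≤ i := by
  calc clt w i ≤ (Finset.range i).card := by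
        apply Finset.card_le_card
        intro x hx
        rw [Finset.mem_range]
        exact (Finset.mem_filter.1 hx).2
    _ = i := Finset.card_range i

theorem clt_le_des {w : Equiv.Perm (Fin n)} (i : ℕ) : clt w i ≤ desA w :=
  Finset.card_filter_le _ _

theorem clt_key {w : Equiv.Perm (Fin n)} (i : ℕ) :
    desA w ≤ clt w i + (n - 1 - i) := by
  have hsub : desSet w ⊆ ((desSet w).filter (· < i)) ∪ (Finset.Ico i (n-1)) := by
    intro x hx
    rw [Finset.mem_union, Finset.mem_filter, Finset.mem_Ico]
    have hxr : x < n - 1 := Finset.mem_range.1 (Finset.mem_filter.1 hx).1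
    by_cases hxi : x < i
    · exact Or.inl ⟨hx, hxi⟩
    · exact Or.inr ⟨by omega, hxr⟩
  have h1 := Finset.card_le_card hsub
  have h2 := Finset.card_union_le ((desSet w).filter (· < i)) (Finset.Ico i (n-1))
  rw [Nat.card_Ico] at h2
  rw [desA_eq]
  unfold clt
  omega

/-- compatibility of a permutation with a word. -/
def compat {n k : ℕ} (w : Equiv.Perm (Fin n)) (f : Fin n → Fin k) : Prop :=
  StrictMono (fun i : Fin n => toLex ((f (w i), w i) : Fin k × Fin n))

theorem compat_exists_unique (f : Fin n → Fin k) : ∃! w : Equiv.Perm (Fin n), compat w f := by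
  classical
  set s : Finset (Lex (Fin k × Fin n)) :=
    Finset.univ.image (fun j : Fin n => toLex ((f j, j) : Fin k × Fin n)) with hs_def
  have hinj : Function.Injective (fun j : Fin n => toLex ((f j, j) : Fin k × Fin n)) := by
    intro a b hab
    have := congrArg (fun x => (ofLex x).2) hab
    simpa using this
  have hs : s.card = n := by
    rw [hs_def, Finset.card_image_of_injective _ hinj, Finset.card_univ, Fintype.card_fin]
  set g := s.orderEmbOfFin hs with hg_def
  have hmem : ∀ i : Fin n, ∃ j : Fin n, toLex ((f j, j) : Fin k × Fin n) = g i := by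
    intro i
    have hmm := s.orderEmbOfFin_mem hs i
    have hmm' : g i ∈ Finset.univ.image (fun j : Fin n => toLex ((f j, j) : Fin k × Fin n)) := by
      rw [← hs_def]; exact hmm
    obtain ⟨j, -, hj⟩ := Finset.mem_image.1 hmm'
    exact ⟨j, hj⟩
  set wfun : Fin n → Fin n := fun i => (ofLex (g i)).2 with hw_def
  have hval : ∀ i : Fin n, g i = toLex ((f (wfun i), wfun i) : Fin k × Fin n) := by
    intro i
    obtain ⟨j, hj⟩ := hmem i
    have h2 : wfun i = j := by simp [hw_def, ← hj]
    rw [h2, hj]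
  have hwinj : Function.Injective wfun := by
    intro a b hab
    apply g.injective
    rw [hval a, hval b, hab]
  let w : Equiv.Perm (Fin n) := Equiv.ofBijective wfun (Finite.injective_iff_bijective.1 hwinj)
  have hwapp : ∀ i, w i = wfun i := fun i => rfl
  refine ⟨w, ?_, ?_⟩
  · intro a b hab
    simp only [hwapp]
    rw [← hval a, ← hval b]
    exact g.strictMono hab
  · -- uniqueness
    intro w' hw'
    have h1 : ∀ x : Fin n, (fun i : Fin n => toLex ((f (w' i), w' i) : Fin k × Fin n)) x ∈ s := by
      intro x
      rw [hs_def]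
      exact Finset.mem_image_of_mem _ (Finset.mem_univ _)
    have h2 := Finset.orderEmbOfFin_unique hs h1 hw'
    apply Equiv.ext
    intro i
    have h3 : toLex ((f (w' i), w' i) : Fin k × Fin n) = g i := congrFun h2 i
    have h4 := congrArg (fun x => (ofLex x).2) h3
    rw [hwapp, hw_def]
    exact h4
end sorting

section counting
variable {n k : ℕ}

theorem compat_cases {w : Equiv.Perm (Fin n)} {f : Fin n → Fin k} (h : compat w f)
    {i j : Fin n} (hij : i < j) :
    f (w i) < f (w j) ∨ (f (w i) = f (w j) ∧ w i < w j) := by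
  have := h hij
  rw [Prod.Lex.lt_iff] at this
  exact this

theorem compat_mono {w : Equiv.Perm (Fin n)} {f : Fin n → Fin k} (h : compat w f)
    {i j : Fin n} (hij : i ≤ j) : f (w i) ≤ f (w j) := by
  rcases eq_or_lt_of_le hij with rfl | hlt
  · exact le_refl _
  · rcases compat_cases h hlt with h1 | ⟨h1, -⟩
    · exact h1.le
    · exact h1.le

theorem wordInv_of_compat {w : Equiv.Perm (Fin n)} {f : Fin n → Fin k} (h : compat w f) :
    wordInv (⇑w) = wordInv f := by
  classical
  unfold wordInv
  apply Finset.card_nbij (fun p => (w p.2, w p.1))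
  · rintro ⟨i, j⟩ hij
    simp only [Finset.mem_filter, Finset.mem_univ, true_and] at hij ⊢
    obtain ⟨-, h1, h2⟩ := Finset.mem_filter.1 hij
    refine Finset.mem_filter.2 ⟨Finset.mem_univ _, h2, ?_⟩
    rcases compat_cases h h1 with h3 | ⟨-, h3⟩
    · exact h3
    · exact absurd h3 (asymm h2)
  · rintro ⟨i, j⟩ - ⟨i', j'⟩ - hh
    simp only [Prod.mk.injEq] at hh
    have := w.injective hh.1
    have := w.injective hh.2
    simp_all [Prod.ext_iff]
  · rintro ⟨p, q⟩ hpq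
    simp only [Finset.coe_filter, Finset.mem_univ, true_and, Set.mem_setOf_eq,
      Set.mem_image] at hpq ⊢
    obtain ⟨h1, h2⟩ := hpq
    refine ⟨(w.symm q, w.symm p), ⟨?_, ?_⟩, ?_⟩
    · -- w.symm q < w.symm p
      rcases lt_trichotomy (w.symm q) (w.symm p) with hlt | heq | hgt
      · exact hlt
      · exfalso
        have : q = p := by
          have := congrArg w heq
          simpa using this
        exact absurd this (ne_of_gt h1)
      · exfalso
        have h4 := compat_mono h hgt.le
        rw [Equiv.apply_symm_apply, Equiv.apply_symm_apply] at h4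
        exact absurd h4 (not_le.2 h2)
    · rw [Equiv.apply_symm_apply, Equiv.apply_symm_apply]
      exact h1
    · simp

theorem card_compat (hn : 1 ≤ n) (w : Equiv.Perm (Fin n)) :
    (Finset.univ.filter fun f : Fin n → Fin k => compat w f).card
      = (k + (n - 1 - desA w)).choose n := by
  classical
  rw [← card_strictMono n (k + (n - 1 - desA w))]
  have hbound1 : ∀ (f : Fin n → Fin k) (i : Fin n),
      (f (w i)).val + (i.val - clt w i.val) < k + (n - 1 - desA w) := by
    intro f i
    have h1 := clt_key (w := w) i.val
    have h2 := clt_le_self (w := w) i.val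
    have h3 := clt_le_des (w := w) i.val
    have h4 := desA_le (w := w)
    have h5 := i.isLt
    have h6 := (f (w i)).isLt
    omega
  have hbound2 : ∀ (b : Fin n → Fin (k + (n - 1 - desA w))), StrictMono b → ∀ (i : Fin n),
      (b i).val + clt w i.val - i.val < k := by
    intro b hb i
    have hlast : n - 1 < n := by omega
    have hgap := strictMono_gap hb ((n-1) - i.val) i ⟨n-1, hlast⟩ (by simp; omega)
    have h0 : (⟨n-1, hlast⟩ : Fin n).val = n - 1 := rfl
    have h1 := (b ⟨n-1, hlast⟩).isLt
    have h2 := clt_le_self (w := w) i.val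
    have h3 := clt_le_des (w := w) i.val
    have h4 := desA_le (w := w)
    have h5 := i.isLt
    have h6 := strictMono_le_apply hb i
    omega
  refine Finset.card_bij'
    (t := Finset.univ.filter fun b : Fin n → Fin (k + (n - 1 - desA w)) => StrictMono b)
    (fun f _ => fun i : Fin n =>
      (⟨(f (w i)).val + (i.val - clt w i.val), hbound1 f i⟩ : Fin (k + (n - 1 - desA w))))
    (fun b hb => fun p : Fin n =>
      (⟨(b (w.symm p)).val + clt w (w.symm p).val - (w.symm p).val,
        hbound2 b ((Finset.mem_filter.1 hb).2) (w.symm p)⟩ : Fin k))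
    ?_ ?_ ?_ ?_
  · -- image is strictMono
    intro f hf
    simp only [Finset.mem_filter, Finset.mem_univ, true_and] at hf ⊢
    apply strictMono_adj
    intro i hi
    have hilt : (⟨i, Nat.lt_of_succ_lt hi⟩ : Fin n) < ⟨i+1, hi⟩ := by
      rw [Fin.mk_lt_mk]; omega
    have hv1 : (⟨i, Nat.lt_of_succ_lt hi⟩ : Fin n).val = i := rfl
    have hv2 : (⟨i+1, hi⟩ : Fin n).val = i + 1 := rfl
    have hcs := clt_succ (w := w) i
    have hcls := clt_le_self (w := w) i
    rw [Fin.lt_def]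
    simp only
    by_cases hd : i ∈ desSet w
    · rw [if_pos hd] at hcs
      have hdes := (mem_desSet hi).1 hd
      rcases compat_cases hf hilt with h3 | ⟨-, h3⟩
      · have := Fin.lt_def.1 h3
        omega
      · exact absurd h3 (asymm hdes)
    · rw [if_neg hd] at hcs
      have h3 := compat_mono hf hilt.le
      have := Fin.le_def.1 h3
      omega
  · -- preimage is compat
    intro b hb
    simp only [Finset.mem_filter, Finset.mem_univ, true_and] at hb ⊢
    unfold compat
    apply strictMono_adj
    intro i hi
    have hilt : (⟨i, Nat.lt_of_succ_lt hi⟩ : Fin n) < ⟨i+1, hi⟩ := by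
      rw [Fin.mk_lt_mk]; omega
    have hv1 : (⟨i, Nat.lt_of_succ_lt hi⟩ : Fin n).val = i := rfl
    have hv2 : (⟨i+1, hi⟩ : Fin n).val = i + 1 := rfl
    have hblt := Fin.lt_def.1 (hb hilt)
    have hcs := clt_succ (w := w) i
    have hcls := clt_le_self (w := w) i
    have hle1 := strictMono_le_apply hb ⟨i, Nat.lt_of_succ_lt hi⟩
    simp only [Equiv.symm_apply_apply]
    rw [Prod.Lex.lt_iff]
    by_cases hd : i ∈ desSet w
    · rw [if_pos hd] at hcs
      left
      rw [Fin.lt_def]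
      simp only [ofLex_toLex]
      omega
    · rw [if_neg hd] at hcs
      have hwlt : w ⟨i, Nat.lt_of_succ_lt hi⟩ < w ⟨i+1, hi⟩ := by
        rcases lt_trichotomy (w ⟨i, Nat.lt_of_succ_lt hi⟩) (w ⟨i+1, hi⟩) with h | h | h
        · exact h
        · exact absurd (w.injective h) (by rw [Fin.ext_iff]; simp)
        · exact absurd ((mem_desSet hi).2 h) hd
      have hle : (b ⟨i, Nat.lt_of_succ_lt hi⟩).val + clt w i - i
          ≤ (b ⟨i+1, hi⟩).val + clt w (i+1) - (i+1) := by omega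
      rcases lt_or_eq_of_le hle with h | h
      · left
        rw [Fin.lt_def]
        exact h
      · right
        exact ⟨Fin.ext h, hwlt⟩
  · -- left inverse
    intro f hf
    funext p
    apply Fin.ext
    simp only [Equiv.symm_apply_apply, Equiv.apply_symm_apply]
    have h2 := clt_le_self (w := w) (w.symm p).val
    omega
  · -- right inverse
    intro b hb
    simp only [Finset.mem_filter, Finset.mem_univ, true_and] at hb
    funext i
    apply Fin.ext
    simp only [Equiv.symm_apply_apply]
    have h2 := clt_le_self (w := w) i.val
    have h6 := strictMono_le_apply hb i
    omega
end counting

section assembly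

variable {n k : ℕ}

noncomputable def sortP (f : Fin n → Fin k) : Equiv.Perm (Fin n) :=
  (compat_exists_unique f).choose

theorem sortP_compat (f : Fin n → Fin k) : compat (sortP f) f :=
  (compat_exists_unique f).choose_spec.1

theorem sortP_unique {w : Equiv.Perm (Fin n)} {f : Fin n → Fin k} (h : compat w f) :
    w = sortP f :=
  (compat_exists_unique f).choose_spec.2 w h

theorem filter_sortP_eq (w : Equiv.Perm (Fin n)) :
    Finset.univ.filter (fun f : Fin n → Fin k => sortP f = w)
      = Finset.univ.filter (fun f => compat w f) := by
  apply Finset.filter_congr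
  intro f _
  constructor
  · rintro rfl; exact sortP_compat f
  · intro h; exact (sortP_unique h).symm

theorem sum_choose_eq (hn : 1 ≤ n) (k : ℕ) :
    ∑ w : Equiv.Perm (Fin n), (k + (n - 1 - desA w)).choose n = k ^ n := by
  have h1 : ∀ w : Equiv.Perm (Fin n),
      (k + (n - 1 - desA w)).choose n
        = (Finset.univ.filter (fun f : Fin n → Fin k => sortP f = w)).card := by
    intro w
    rw [filter_sortP_eq, card_compat hn]
  rw [Finset.sum_congr rfl (fun w _ => h1 w)]
  rw [← Finset.card_eq_sum_card_fiberwise (fun f _ => Finset.mem_univ (sortP f))]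
  rw [Finset.card_univ, Fintype.card_fun, Fintype.card_fin, Fintype.card_fin]

theorem sum_sign_choose_eq (hn : 1 ≤ n) (k : ℕ) :
    ∑ w : Equiv.Perm (Fin n),
      (Equiv.Perm.sign w : ℤ) * ((k + (n - 1 - desA w)).choose n : ℤ)
      = (k : ℤ) ^ ((n + 1) / 2) := by
  have h1 : ∀ w : Equiv.Perm (Fin n),
      (Equiv.Perm.sign w : ℤ) * ((k + (n - 1 - desA w)).choose n : ℤ)
        = ∑ f ∈ Finset.univ.filter (fun f : Fin n → Fin k => sortP f = w),
            ((Equiv.Perm.sign (sortP f) : ℤ)) := by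
    intro w
    rw [Finset.sum_congr rfl (g := fun _ => ((Equiv.Perm.sign w : ℤ)))
      (fun f hf => by rw [(Finset.mem_filter.1 hf).2])]
    rw [Finset.sum_const, nsmul_eq_mul, mul_comm]
    congr 1
    rw [filter_sortP_eq, card_compat hn]
  rw [Finset.sum_congr rfl (fun w _ => h1 w)]
  rw [Finset.sum_fiberwise_of_maps_to (fun f _ => Finset.mem_univ (sortP f))]
  rw [← signed_word_sum k n]
  apply Finset.sum_congr rfl
  intro f _
  rw [sign_eq_wordInv, wordInv_of_compat (sortP_compat f)]

theorem even_sum_choose (hn : 1 ≤ n) (k : ℕ) :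
    2 * ∑ w ∈ Finset.univ.filter (fun w : Equiv.Perm (Fin n) => Equiv.Perm.sign w = 1),
        (((k + (n - 1 - desA w)).choose n : ℚ))
      = (k : ℚ) ^ n + (k : ℚ) ^ ((n + 1) / 2) := by
  have hS1 : ∑ w : Equiv.Perm (Fin n), (((k + (n - 1 - desA w)).choose n : ℚ)) = (k : ℚ) ^ n := by
    have := sum_choose_eq hn k
    have h2 := congrArg (Nat.cast : ℕ → ℚ) this
    push_cast at h2
    exact h2
  have hS2 : ∑ w : Equiv.Perm (Fin n),
      ((Equiv.Perm.sign w : ℤ) : ℚ) * (((k + (n - 1 - desA w)).choose n : ℚ))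
        = (k : ℚ) ^ ((n + 1) / 2) := by
    have := sum_sign_choose_eq hn k
    have h2 := congrArg (Int.cast : ℤ → ℚ) this
    push_cast at h2
    exact h2
  have hsplit : ∑ w : Equiv.Perm (Fin n),
      (1 + ((Equiv.Perm.sign w : ℤ) : ℚ)) * (((k + (n - 1 - desA w)).choose n : ℚ))
      = (k : ℚ) ^ n + (k : ℚ) ^ ((n + 1) / 2) := by
    rw [← hS1, ← hS2, ← Finset.sum_add_distrib]
    apply Finset.sum_congr rfl
    intro w _
    ring
  rw [← hsplit]
  rw [← Finset.sum_filter_add_sum_filter_not (Finset.univ : Finset (Equiv.Perm (Fin n)))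
    (fun w => Equiv.Perm.sign w = 1)]
  have hz : ∑ w ∈ Finset.univ.filter (fun w : Equiv.Perm (Fin n) => ¬ Equiv.Perm.sign w = 1),
      (1 + ((Equiv.Perm.sign w : ℤ) : ℚ)) * (((k + (n - 1 - desA w)).choose n : ℚ)) = 0 := by
    apply Finset.sum_eq_zero
    intro w hw
    rcases Int.units_eq_one_or (Equiv.Perm.sign w) with h | h
    · exact absurd h (Finset.mem_filter.1 hw).2
    · rw [h]
      norm_num
  rw [hz, add_zero, Finset.mul_sum]
  apply Finset.sum_congr rfl
  intro w hw
  rw [(Finset.mem_filter.1 hw).2]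
  norm_num

theorem positive_eulerian_series_aux (n : ℕ) (hn : 1 ≤ n) :
    ∑ w ∈ Finset.univ.filter (fun w : Equiv.Perm (Fin n) => Equiv.Perm.sign w = 1),
        (PowerSeries.X : PowerSeries ℚ) ^ (desA w + 1)
      = (1 - PowerSeries.X) ^ (n + 1) *
          PowerSeries.mk (fun k => ((k : ℚ) ^ n + (k : ℚ) ^ ((n + 1) / 2)) / 2) := by
  classical
  set D : PowerSeries ℚ := PowerSeries.mk (fun j => ((Nat.choose (n + j) n : ℕ) : ℚ)) with hD
  set G : PowerSeries ℚ := PowerSeries.mk (fun k => ((k : ℚ) ^ n + (k : ℚ) ^ ((n + 1) / 2)) / 2)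
    with hG
  set L : PowerSeries ℚ :=
    ∑ w ∈ Finset.univ.filter (fun w : Equiv.Perm (Fin n) => Equiv.Perm.sign w = 1),
        (PowerSeries.X : PowerSeries ℚ) ^ (desA w + 1) with hL
  have hunit : D * (1 - PowerSeries.X) ^ (n + 1) = 1 := by
    have := PowerSeries.mk_add_choose_mul_one_sub_pow_eq_one (S := ℚ) (d := n)
    exact this
  have key : L * D = G := by
    ext j
    rw [hL, Finset.sum_mul, map_sum]
    have hterm : ∀ w : Equiv.Perm (Fin n), Equiv.Perm.sign w = 1 →
        (PowerSeries.coeff j) ((PowerSeries.X : PowerSeries ℚ) ^ (desA w + 1) * D)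
          = (((j + (n - 1 - desA w)).choose n : ℚ)) := by
      intro w _
      rw [PowerSeries.coeff_X_pow_mul', hD]
      split_ifs with h
      · rw [PowerSeries.coeff_mk]
        congr 2
        have := desA_le (w := w)
        omega
      · rw [eq_comm, Nat.cast_eq_zero, Nat.choose_eq_zero_iff]
        have := desA_le (w := w)
        omega
    rw [Finset.sum_congr rfl (fun w hw => hterm w (Finset.mem_filter.1 hw).2)]
    rw [hG, PowerSeries.coeff_mk]
    have := even_sum_choose hn (n := n) j
    field_simp
    linarith [this]
  calc L = L * (D * (1 - PowerSeries.X) ^ (n + 1)) := by rw [hunit, mul_one]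
    _ = (L * D) * (1 - PowerSeries.X) ^ (n + 1) := by ring
    _ = G * (1 - PowerSeries.X) ^ (n + 1) := by rw [key]
    _ = (1 - PowerSeries.X) ^ (n + 1) * G := mul_comm _ _
end assembly

theorem positive_eulerian_series (n : ℕ) (hn : 1 ≤ n) :
    ∑ w ∈ Finset.univ.filter (fun w : Equiv.Perm (Fin n) => Equiv.Perm.sign w = 1),
        (PowerSeries.X : PowerSeries ℚ) ^ (desA w + 1)
      = (1 - PowerSeries.X) ^ (n + 1) *
          PowerSeries.mk (fun k => ((k : ℚ) ^ n + (k : ℚ) ^ ((n + 1) / 2)) / 2) := by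
  exact positive_eulerian_series_aux n hn
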